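/- Let λ be a finite measure on a measurable space Y, let K : X × Y → (0, ∞) be bounded measurable, and let ψ₁, ψ₂ : Y → ℝ be bounded measurable functions with sup_y |ψ₁(y) − ψ₂(y)| ≤ ε. For i = 1, 2 define the probability kernels k_i(x, dy) := K(x, y) e^{ψ_i(y)} dλ(y) / ∫ K(x, z) e^{ψ_i(z)} dλ(z). Then sup_x ‖k₁(x, ·) − k₂(x, ·)‖_TV ≤ ε e^{2ε}, and consequently for every bounded measurable h : Y → ℝ, sup_x |∫ h dk₁(x, ·) − ∫ h dk₂(x, ·)| ≤ 2 ‖h‖_∞ ε e^{2ε}. -/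

import Mathlib

open MeasureTheory

lemma gibbs_aux {Y : Type*} [MeasurableSpace Y]
    (lam : Measure Y) [IsFiniteMeasure lam] (hlam : lam ≠ 0)
    (f₁ f₂ : Y → ℝ) (h₁ : Integrable f₁ lam) (h₂ : Integrable f₂ lam)
    (hp₁ : ∀ y, 0 < f₁ y) (hp₂ : ∀ y, 0 < f₂ y) (ε : ℝ)
    (h12 : ∀ y, f₁ y ≤ Real.exp ε * f₂ y) (h21 : ∀ y, f₂ y ≤ Real.exp ε * f₁ y) :
    (∀ y, |f₁ y / (∫ z, f₁ z ∂lam) - f₂ y / (∫ z, f₂ z ∂lam)|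
        ≤ (Real.exp (2 * ε) - 1) * (f₂ y / (∫ z, f₂ z ∂lam)))
    ∧ (∫ y, |f₁ y / (∫ z, f₁ z ∂lam) - f₂ y / (∫ z, f₂ z ∂lam)| ∂lam
        ≤ Real.exp (2 * ε) - 1) := by
  have hY : Nonempty Y := by
    by_contra h
    rw [not_nonempty_iff] at h
    exact hlam (Measure.eq_zero_of_isEmpty lam)
  set Z₁ := ∫ z, f₁ z ∂lam with hZ₁d
  set Z₂ := ∫ z, f₂ z ∂lam with hZ₂d
  have hZpos : ∀ (f : Y → ℝ), Integrable f lam → (∀ y, 0 < f y) → 0 < ∫ z, f z ∂lam := by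
    intro f hint hpos
    rw [integral_pos_iff_support_of_nonneg (fun y => (hpos y).le) hint]
    have : Function.support f = Set.univ := by ext y; simp [(hpos y).ne']
    rw [this]
    simpa [Measure.measure_univ_pos] using hlam
  have hZ₁ : 0 < Z₁ := hZpos f₁ h₁ hp₁
  have hZ₂ : 0 < Z₂ := hZpos f₂ h₂ hp₂
  have hE : 0 < Real.exp (2 * ε) := Real.exp_pos _
  have hE1 : 1 ≤ Real.exp (2 * ε) := by
    obtain ⟨y₀⟩ := hY
    have h1 := h12 y₀
    have h2 := h21 y₀
    have := hp₂ y₀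
    have := hp₁ y₀
    have hee : Real.exp (2 * ε) = Real.exp ε * Real.exp ε := by
      rw [← Real.exp_add]; ring_nf
    nlinarith [Real.exp_pos ε]
  have hZ12 : Z₁ ≤ Real.exp ε * Z₂ := by
    calc Z₁ ≤ ∫ z, Real.exp ε * f₂ z ∂lam :=
          integral_mono h₁ (h₂.const_mul _) h12
      _ = Real.exp ε * Z₂ := integral_const_mul _ _
  have hZ21 : Z₂ ≤ Real.exp ε * Z₁ := by
    calc Z₂ ≤ ∫ z, Real.exp ε * f₁ z ∂lam :=
          integral_mono h₂ (h₁.const_mul _) h21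
      _ = Real.exp ε * Z₁ := integral_const_mul _ _
  have hee : Real.exp (2 * ε) = Real.exp ε * Real.exp ε := by
    rw [← Real.exp_add]; ring_nf
  have hpq1 : ∀ y, f₁ y / Z₁ ≤ Real.exp (2 * ε) * (f₂ y / Z₂) := by
    intro y
    rw [mul_div_assoc', div_le_div_iff₀ hZ₁ hZ₂]
    calc f₁ y * Z₂ ≤ (Real.exp ε * f₂ y) * (Real.exp ε * Z₁) :=
          mul_le_mul (h12 y) hZ21 hZ₂.le (mul_nonneg (Real.exp_pos ε).le (hp₂ y).le)
      _ = Real.exp (2 * ε) * f₂ y * Z₁ := by rw [hee]; ring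
  have hpq2 : ∀ y, f₂ y / Z₂ ≤ Real.exp (2 * ε) * (f₁ y / Z₁) := by
    intro y
    rw [mul_div_assoc', div_le_div_iff₀ hZ₂ hZ₁]
    calc f₂ y * Z₁ ≤ (Real.exp ε * f₁ y) * (Real.exp ε * Z₂) :=
          mul_le_mul (h21 y) hZ12 hZ₁.le (mul_nonneg (Real.exp_pos ε).le (hp₁ y).le)
      _ = Real.exp (2 * ε) * f₁ y * Z₂ := by rw [hee]; ring
  have hpt : ∀ y, |f₁ y / Z₁ - f₂ y / Z₂| ≤ (Real.exp (2 * ε) - 1) * (f₂ y / Z₂) := by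
    intro y
    have hq : 0 < f₂ y / Z₂ := div_pos (hp₂ y) hZ₂
    have hp : 0 < f₁ y / Z₁ := div_pos (hp₁ y) hZ₁
    rw [abs_le]
    constructor
    · have := hpq2 y
      nlinarith [sq_nonneg (Real.exp (2 * ε) - 1)]
    · have := hpq1 y
      nlinarith
  refine ⟨hpt, ?_⟩
  have hint₁ : Integrable (fun y => f₁ y / Z₁) lam := h₁.div_const _
  have hint₂ : Integrable (fun y => f₂ y / Z₂) lam := h₂.div_const _
  have hintd : Integrable (fun y => |f₁ y / Z₁ - f₂ y / Z₂|) lam := (hint₁.sub hint₂).abs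
  calc ∫ y, |f₁ y / Z₁ - f₂ y / Z₂| ∂lam
      ≤ ∫ y, (Real.exp (2 * ε) - 1) * (f₂ y / Z₂) ∂lam :=
        integral_mono hintd (hint₂.const_mul _) hpt
    _ = (Real.exp (2 * ε) - 1) * (Z₂ / Z₂) := by
        rw [integral_const_mul, integral_div]
    _ = Real.exp (2 * ε) - 1 := by rw [div_self hZ₂.ne']; ring

theorem gibbs_kernel_stability
    {X Y : Type*} [MeasurableSpace X] [MeasurableSpace Y]
    (lam : Measure Y) [IsFiniteMeasure lam] (hlam : lam ≠ 0)
    (K : X → Y → ℝ) (hKpos : ∀ x y, 0 < K x y)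
    (CK : ℝ) (hKb : ∀ x y, K x y ≤ CK)
    (hKm : Measurable (Function.uncurry K))
    (ψ₁ ψ₂ : Y → ℝ) (hψ₁m : Measurable ψ₁) (hψ₂m : Measurable ψ₂)
    (B₁ B₂ : ℝ) (hψ₁b : ∀ y, |ψ₁ y| ≤ B₁) (hψ₂b : ∀ y, |ψ₂ y| ≤ B₂)
    (ε : ℝ) (hε : ∀ y, |ψ₁ y - ψ₂ y| ≤ ε) :
    (∀ x, (1 / 2) * ∫ y,
        |K x y * Real.exp (ψ₁ y) / (∫ z, K x z * Real.exp (ψ₁ z) ∂lam)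
          - K x y * Real.exp (ψ₂ y) / (∫ z, K x z * Real.exp (ψ₂ z) ∂lam)| ∂lam
      ≤ ε * Real.exp (2 * ε))
    ∧ (∀ h : Y → ℝ, Measurable h → ∀ Ch : ℝ, (∀ y, |h y| ≤ Ch) →
      ∀ x,
        |(∫ y, h y * (K x y * Real.exp (ψ₁ y)
            / (∫ z, K x z * Real.exp (ψ₁ z) ∂lam)) ∂lam)
          - ∫ y, h y * (K x y * Real.exp (ψ₂ y)
            / (∫ z, K x z * Real.exp (ψ₂ z) ∂lam)) ∂lam|
        ≤ 2 * Ch * ε * Real.exp (2 * ε)) := by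
  have hY : Nonempty Y := by
    by_contra h
    rw [not_nonempty_iff] at h
    exact hlam (Measure.eq_zero_of_isEmpty lam)
  obtain ⟨y₀⟩ := hY
  have hε0 : 0 ≤ ε := le_trans (abs_nonneg _) (hε y₀)
  have harith : Real.exp (2 * ε) - 1 ≤ 2 * ε * Real.exp (2 * ε) := by
    have h1 := Real.add_one_le_exp (-(2 * ε))
    rw [Real.exp_neg] at h1
    have hE := Real.exp_pos (2 * ε)
    have h2 := mul_le_mul_of_nonneg_right h1 hE.le
    rw [inv_mul_cancel₀ hE.ne'] at h2
    nlinarith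
  have hintf : ∀ (x : X) (ψ : Y → ℝ), Measurable ψ → ∀ B : ℝ, (∀ y, |ψ y| ≤ B) →
      Integrable (fun y => K x y * Real.exp (ψ y)) lam := by
    intro x ψ hψ B hB
    have hKxm : Measurable (K x) := hKm.comp measurable_prodMk_left
    refine (integrable_const (CK * Real.exp B)).mono'
      (hKxm.mul hψ.exp).aestronglyMeasurable (ae_of_all _ fun y => ?_)
    have h0 : 0 ≤ K x y * Real.exp (ψ y) :=
      mul_nonneg (hKpos x y).le (Real.exp_pos _).le
    rw [Real.norm_eq_abs, abs_of_nonneg h0]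
    exact mul_le_mul (hKb x y) (Real.exp_le_exp.2 ((abs_le.1 (hB y)).2))
      (Real.exp_pos _).le ((hKpos x y).le.trans (hKb x y))
  have main : ∀ x : X,
      (∀ y, |K x y * Real.exp (ψ₁ y) / (∫ z, K x z * Real.exp (ψ₁ z) ∂lam)
          - K x y * Real.exp (ψ₂ y) / (∫ z, K x z * Real.exp (ψ₂ z) ∂lam)|
        ≤ (Real.exp (2 * ε) - 1)
            * (K x y * Real.exp (ψ₂ y) / (∫ z, K x z * Real.exp (ψ₂ z) ∂lam)))
      ∧ (∫ y, |K x y * Real.exp (ψ₁ y) / (∫ z, K x z * Real.exp (ψ₁ z) ∂lam)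
          - K x y * Real.exp (ψ₂ y) / (∫ z, K x z * Real.exp (ψ₂ z) ∂lam)| ∂lam
        ≤ Real.exp (2 * ε) - 1) := by
    intro x
    refine gibbs_aux lam hlam _ _ (hintf x ψ₁ hψ₁m B₁ hψ₁b) (hintf x ψ₂ hψ₂m B₂ hψ₂b)
      (fun y => mul_pos (hKpos x y) (Real.exp_pos _))
      (fun y => mul_pos (hKpos x y) (Real.exp_pos _)) ε (fun y => ?_) (fun y => ?_)
    · have h1 : ψ₁ y ≤ ψ₂ y + ε := by have := abs_le.1 (hε y); linarith [this.2]
      calc K x y * Real.exp (ψ₁ y) ≤ K x y * Real.exp (ψ₂ y + ε) :=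
            mul_le_mul_of_nonneg_left (Real.exp_le_exp.2 h1) (hKpos x y).le
        _ = Real.exp ε * (K x y * Real.exp (ψ₂ y)) := by rw [Real.exp_add]; ring
    · have h1 : ψ₂ y ≤ ψ₁ y + ε := by have := abs_le.1 (hε y); linarith [this.1]
      calc K x y * Real.exp (ψ₂ y) ≤ K x y * Real.exp (ψ₁ y + ε) :=
            mul_le_mul_of_nonneg_left (Real.exp_le_exp.2 h1) (hKpos x y).le
        _ = Real.exp ε * (K x y * Real.exp (ψ₁ y)) := by rw [Real.exp_add]; ring
  constructor
  · intro x
    have h := (main x).2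
    nlinarith [harith]
  · intro h hm Ch hCh x
    have hCh0 : 0 ≤ Ch := le_trans (abs_nonneg _) (hCh y₀)
    set Z₁ := ∫ z, K x z * Real.exp (ψ₁ z) ∂lam with hZ₁d
    set Z₂ := ∫ z, K x z * Real.exp (ψ₂ z) ∂lam with hZ₂d
    have hi₁ : Integrable (fun y => K x y * Real.exp (ψ₁ y) / Z₁) lam :=
      (hintf x ψ₁ hψ₁m B₁ hψ₁b).div_const _
    have hi₂ : Integrable (fun y => K x y * Real.exp (ψ₂ y) / Z₂) lam :=
      (hintf x ψ₂ hψ₂m B₂ hψ₂b).div_const _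
    have hbm : ∀ y, ‖h y‖ ≤ Ch := fun y => by
      rw [Real.norm_eq_abs]; exact hCh y
    have hih₁ : Integrable (fun y => h y * (K x y * Real.exp (ψ₁ y) / Z₁)) lam :=
      hi₁.bdd_mul hm.aestronglyMeasurable (ae_of_all _ hbm)
    have hih₂ : Integrable (fun y => h y * (K x y * Real.exp (ψ₂ y) / Z₂)) lam :=
      hi₂.bdd_mul hm.aestronglyMeasurable (ae_of_all _ hbm)
    rw [← integral_sub hih₁ hih₂]
    have step1 : |∫ y, (h y * (K x y * Real.exp (ψ₁ y) / Z₁)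
          - h y * (K x y * Real.exp (ψ₂ y) / Z₂)) ∂lam|
        ≤ ∫ y, |h y * (K x y * Real.exp (ψ₁ y) / Z₁)
          - h y * (K x y * Real.exp (ψ₂ y) / Z₂)| ∂lam :=
      by simpa [Real.norm_eq_abs] using
        norm_integral_le_integral_norm (μ := lam)
          (f := fun y => h y * (K x y * Real.exp (ψ₁ y) / Z₁)
            - h y * (K x y * Real.exp (ψ₂ y) / Z₂))
    refine step1.trans ?_
    have hintd : Integrable (fun y => |h y * (K x y * Real.exp (ψ₁ y) / Z₁)
        - h y * (K x y * Real.exp (ψ₂ y) / Z₂)|) lam := (hih₁.sub hih₂).abs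
    have hintabs : Integrable (fun y => |K x y * Real.exp (ψ₁ y) / Z₁
        - K x y * Real.exp (ψ₂ y) / Z₂|) lam := (hi₁.sub hi₂).abs
    have step2 : ∫ y, |h y * (K x y * Real.exp (ψ₁ y) / Z₁)
          - h y * (K x y * Real.exp (ψ₂ y) / Z₂)| ∂lam
        ≤ ∫ y, Ch * |K x y * Real.exp (ψ₁ y) / Z₁
          - K x y * Real.exp (ψ₂ y) / Z₂| ∂lam := by
      refine integral_mono hintd (hintabs.const_mul _) fun y => ?_
      rw [← mul_sub, abs_mul]
      exact mul_le_mul_of_nonneg_right (hCh y) (abs_nonneg _)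
    refine step2.trans ?_
    rw [integral_const_mul]
    have h2 := (main x).2
    calc Ch * ∫ y, |K x y * Real.exp (ψ₁ y) / Z₁
          - K x y * Real.exp (ψ₂ y) / Z₂| ∂lam
        ≤ Ch * (Real.exp (2 * ε) - 1) := mul_le_mul_of_nonneg_left h2 hCh0
      _ ≤ Ch * (2 * ε * Real.exp (2 * ε)) := mul_le_mul_of_nonneg_left harith hCh0
      _ = 2 * Ch * ε * Real.exp (2 * ε) := by ring
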